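/- Fix r₀ > 0, γ > 1, A > 0 and a real number k. Let J_z : [0,r₀] → ℝ be continuous, define B_θ(r) = (1/r) ∫₀^r s J_z(s) ds for r ∈ (0,r₀] (B_θ(0)=0) and p'(r) = −B_θ(r) J_z(r), assume p is admissible (p ∈ C¹([0,r₀]), p > 0 on [0,r₀), p(r₀) = 0, p' < 0 on some interval [r₀−ε, r₀), lim_{r→r₀⁻} p(r)/p'(r) = 0), and set ρ = (p/A)^{1/γ}. Then there exists a constant C > 0 such that for all C¹ functions ξ, η on [0,r₀] with ξ(0) = 0: | E_{0,k}(ξ,η) | ≤ C ‖(ξ,η)‖²_{X_k}, where E_{0,k}(ξ,η) = 2π² ∫₀^{r₀} { 2p'(r)ξ(r)²/r + B_θ(r)² [ kη(r) − (1/r)((rξ)'(r) − 2ξ(r)) ]² + γ p(r) [ (1/r)(rξ)'(r) − kη(r) ]² } r dr and ‖(ξ,η)‖²_{X_k} = ∫₀^{r₀} { p(r) | (1/r)(rξ)'(r) |² + B_θ(r)² [ kη(r) − (1/r)((rξ)'(r) − 2ξ(r)) ]² } r dr + ∫₀^{r₀} ρ(r)(ξ(r)² + η(r)²) r dr. -/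

import Mathlib

open Set MeasureTheory

private lemma zpinch_aux_intable {F : ℝ → ℝ} {b M : ℝ} (hb : 0 ≤ b)
    (hc : ContinuousOn F (Ioc 0 b)) (hM : ∀ r ∈ Ioc (0:ℝ) b, |F r| ≤ M) :
    IntervalIntegrable F volume 0 b := by
  rw [intervalIntegrable_iff, uIoc_of_le hb]
  refine Integrable.mono' (g := fun _ => M)
    (integrableOn_const measure_Ioc_lt_top.ne)
    (hc.aestronglyMeasurable measurableSet_Ioc) ?_
  refine (ae_restrict_iff' measurableSet_Ioc).2 (Filter.Eventually.of_forall ?_)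
  intro r hr
  simpa [Real.norm_eq_abs] using hM r hr

private lemma zpinch_abs_mul_le {x y X Y : ℝ} (hx : |x| ≤ X) (hy : |y| ≤ Y) :
    |x * y| ≤ X * Y := by
  rw [abs_mul]
  exact mul_le_mul hx hy (abs_nonneg _) ((abs_nonneg x).trans hx)

private lemma zpinch_abs_sq_le {x X : ℝ} (hx : |x| ≤ X) : |x ^ 2| ≤ X ^ 2 := by
  rw [abs_pow]
  exact pow_le_pow_left₀ (abs_nonneg _) hx 2

set_option maxHeartbeats 1600000 in
/-- Lemma 3.8, well-definedness of `E_{0,k}` on `X_k`. For an admissible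
z-pinch equilibrium there is `C > 0` such that `|E_{0,k}(ξ,η)| ≤ C ‖(ξ,η)‖²_{X_k}` for every
`C¹` pair `(ξ,η)` with `ξ(0) = 0`. -/
theorem zpinch_sausage_energy_well_defined
    (r₀ γ A k : ℝ) (hr₀ : 0 < r₀) (hγ : 1 < γ) (hA : 0 < A)
    (Jz Bθ p p' ρ : ℝ → ℝ)
    (hJc : ContinuousOn Jz (Icc (0:ℝ) r₀))
    (hBθ0 : Bθ 0 = 0)
    (hBθ : ∀ r ∈ Ioc (0:ℝ) r₀, Bθ r = (1 / r) * ∫ s in (0:ℝ)..r, s * Jz s)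
    (hp'def : ∀ r ∈ Icc (0:ℝ) r₀, p' r = -(Bθ r * Jz r))
    (hp : ∀ r ∈ Icc (0:ℝ) r₀, HasDerivWithinAt p (p' r) (Icc (0:ℝ) r₀) r)
    -- admissibility of `p`
    (hppos : ∀ r ∈ Ico (0:ℝ) r₀, 0 < p r)
    (hpr₀ : p r₀ = 0)
    (ε : ℝ) (hε : 0 < ε)
    (hp'neg : ∀ r ∈ Ico (r₀ - ε) r₀, p' r < 0)
    (hlim : Filter.Tendsto (fun r => p r / p' r) (nhdsWithin r₀ (Iio r₀)) (nhds 0))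
    (hρ : ∀ r ∈ Icc (0:ℝ) r₀, ρ r = (p r / A) ^ (1 / γ)) :
    ∃ C > 0, ∀ ξ η ξ' η' : ℝ → ℝ,
      (∀ r ∈ Icc (0:ℝ) r₀, HasDerivWithinAt ξ (ξ' r) (Icc (0:ℝ) r₀) r) →
      ContinuousOn ξ' (Icc (0:ℝ) r₀) →
      (∀ r ∈ Icc (0:ℝ) r₀, HasDerivWithinAt η (η' r) (Icc (0:ℝ) r₀) r) →
      ContinuousOn η' (Icc (0:ℝ) r₀) →
      ξ 0 = 0 →
      |2 * Real.pi ^ 2 * ∫ r in (0:ℝ)..r₀,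
          (2 * p' r * (ξ r) ^ 2 / r
            + (Bθ r) ^ 2 * (k * η r - (r * ξ' r - ξ r) / r) ^ 2
            + γ * p r * ((ξ r + r * ξ' r) / r - k * η r) ^ 2) * r| ≤
        C * ((∫ r in (0:ℝ)..r₀,
            (p r * ((ξ r + r * ξ' r) / r) ^ 2
              + (Bθ r) ^ 2 * (k * η r - (r * ξ' r - ξ r) / r) ^ 2) * r)
          + (∫ r in (0:ℝ)..r₀, ρ r * ((ξ r) ^ 2 + (η r) ^ 2) * r)) := by
  have hr01 : (0:ℝ) ≤ r₀ := hr₀.le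
  have hγ0 : (0:ℝ) < γ := by linarith
  have hpc : ContinuousOn p (Icc 0 r₀) := fun r hr => (hp r hr).continuousWithinAt
  have hpnn : ∀ r ∈ Icc (0:ℝ) r₀, 0 ≤ p r := by
    intro r hr
    rcases lt_or_eq_of_le hr.2 with h | h
    · exact (hppos r ⟨hr.1, h⟩).le
    · rw [h, hpr₀]
  -- bound on Jz
  obtain ⟨MJ0, hMJ0⟩ := isCompact_Icc.exists_bound_of_continuousOn hJc
  set MJ : ℝ := max MJ0 0 with hMJdef
  have hMJnn : 0 ≤ MJ := le_max_right _ _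
  have hJb : ∀ r ∈ Icc (0:ℝ) r₀, |Jz r| ≤ MJ := fun r hr =>
    le_trans (by simpa [Real.norm_eq_abs] using hMJ0 r hr) (le_max_left _ _)
  clear_value MJ
  -- bound on the primitive of s * Jz s
  have hprimb : ∀ r ∈ Icc (0:ℝ) r₀, |∫ s in (0:ℝ)..r, s * Jz s| ≤ MJ * r ^ 2 / 2 := by
    intro r hr
    have h0r : (0:ℝ) ≤ r := hr.1
    have hle : ‖∫ s in (0:ℝ)..r, s * Jz s‖ ≤ |∫ s in (0:ℝ)..r, MJ * s| := by
      apply intervalIntegral.norm_integral_le_abs_of_norm_le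
      · rw [uIoc_of_le h0r]
        refine (ae_restrict_iff' measurableSet_Ioc).2 (Filter.Eventually.of_forall ?_)
        intro s hs
        have hsI : s ∈ Icc (0:ℝ) r₀ := ⟨hs.1.le, hs.2.trans hr.2⟩
        rw [Real.norm_eq_abs, abs_mul, abs_of_nonneg hs.1.le]
        calc s * |Jz s| ≤ s * MJ := mul_le_mul_of_nonneg_left (hJb s hsI) hs.1.le
          _ = MJ * s := mul_comm _ _
      · exact (continuous_const.mul continuous_id).intervalIntegrable _ _
    rw [Real.norm_eq_abs] at hle
    refine hle.trans ?_
    rw [intervalIntegral.integral_const_mul, integral_id]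
    have h1 : MJ * ((r ^ 2 - 0 ^ 2) / 2) = MJ * r ^ 2 / 2 := by ring
    rw [h1, abs_of_nonneg (div_nonneg (mul_nonneg hMJnn (sq_nonneg r)) two_pos.le)]
  -- bound on Bθ
  have hBb : ∀ r ∈ Ioc (0:ℝ) r₀, |Bθ r| ≤ MJ / 2 * r := by
    intro r hr
    have hrne : r ≠ 0 := ne_of_gt hr.1
    rw [hBθ r hr, abs_mul]
    have h1r : (0:ℝ) < 1 / r := by
      rw [one_div]; exact inv_pos.2 hr.1
    rw [abs_of_pos h1r]
    calc 1 / r * |∫ s in (0:ℝ)..r, s * Jz s| ≤ 1 / r * (MJ * r ^ 2 / 2) :=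
          mul_le_mul_of_nonneg_left (hprimb r ⟨hr.1.le, hr.2⟩) h1r.le
      _ = MJ / 2 * r := by field_simp
  -- bound on p'
  have hp'b : ∀ r ∈ Icc (0:ℝ) r₀, |p' r| ≤ MJ ^ 2 / 2 * r := by
    intro r hr
    rcases eq_or_lt_of_le hr.1 with h | h
    · rw [hp'def r hr, ← h, hBθ0]
      simp
    · rw [hp'def r hr, abs_neg, abs_mul]
      calc |Bθ r| * |Jz r| ≤ (MJ / 2 * r) * MJ :=
            mul_le_mul (hBb r ⟨h, hr.2⟩) (hJb r hr) (abs_nonneg _)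
              (mul_nonneg (div_nonneg hMJnn two_pos.le) h.le)
        _ = MJ ^ 2 / 2 * r := by ring
  -- continuity of the primitive and of Bθ on Ioc
  have hprimc : ContinuousOn (fun x => ∫ s in (0:ℝ)..x, s * Jz s) (Icc 0 r₀) := by
    have hint : IntegrableOn (fun s => s * Jz s) (Icc 0 r₀) volume :=
      (continuousOn_id.mul hJc).integrableOn_compact isCompact_Icc
    have h := intervalIntegral.continuousOn_primitive (f := fun s => s * Jz s)
      (a := 0) (b := r₀) (μ := volume) hint
    exact h.congr (fun x hx => intervalIntegral.integral_of_le hx.1)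
  have hBc : ContinuousOn Bθ (Ioc 0 r₀) := by
    refine ContinuousOn.congr ?_ (fun r hr => hBθ r hr)
    exact (continuousOn_const.div continuousOn_id (fun r hr => ne_of_gt hr.1)).mul
      (hprimc.mono Ioc_subset_Icc_self)
  have hp'cIoc : ContinuousOn p' (Ioc 0 r₀) := by
    refine ContinuousOn.congr ((hBc.mul (hJc.mono Ioc_subset_Icc_self)).neg) ?_
    intro r hr
    exact hp'def r ⟨hr.1.le, hr.2⟩
  -- ρ basics
  have hρc : ContinuousOn ρ (Icc 0 r₀) := by
    refine ContinuousOn.congr ((hpc.div_const A).rpow_const ?_) (fun r hr => hρ r hr)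
    intro x hx
    exact Or.inr (le_of_lt (by positivity))
  have hρnn : ∀ r ∈ Icc (0:ℝ) r₀, 0 ≤ ρ r := fun r hr => by
    rw [hρ r hr]; exact Real.rpow_nonneg (div_nonneg (hpnn r hr) hA.le) _
  -- bound on p
  obtain ⟨Mp0, hMp0⟩ := isCompact_Icc.exists_bound_of_continuousOn hpc
  set Mp : ℝ := max Mp0 0 with hMpdef
  have hMpnn : 0 ≤ Mp := le_max_right _ _
  have hpub : ∀ r ∈ Icc (0:ℝ) r₀, p r ≤ Mp := fun r hr =>
    le_trans (le_abs_self _) (le_trans (by simpa [Real.norm_eq_abs] using hMp0 r hr)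
      (le_max_left _ _))
  clear_value Mp
  -- upper bound on ρ and the key bound p ≤ K * ρ
  set ρM : ℝ := max ((Mp / A) ^ (1 / γ)) 1 with hρMdef
  have hρMpos : 0 < ρM := lt_of_lt_of_le one_pos (le_max_right _ _)
  have hρub : ∀ r ∈ Icc (0:ℝ) r₀, ρ r ≤ ρM := by
    intro r hr
    rw [hρ r hr]
    refine le_trans (Real.rpow_le_rpow (div_nonneg (hpnn r hr) hA.le)
      (by gcongr; exact hpub r hr) (le_of_lt (by positivity))) (le_max_left _ _)
  clear_value ρM
  set K : ℝ := A * ρM ^ (γ - 1) with hKdef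
  have hKpos : 0 < K := mul_pos hA (Real.rpow_pos_of_pos hρMpos _)
  clear_value K
  have hpK : ∀ r ∈ Icc (0:ℝ) r₀, p r ≤ K * ρ r := by
    intro r hr
    have hq : 0 ≤ p r / A := div_nonneg (hpnn r hr) hA.le
    rcases eq_or_lt_of_le hq with h | h
    · have hpr : p r = 0 := by
        have h' := h.symm
        rw [div_eq_zero_iff] at h'
        rcases h' with h' | h'
        · exact h'
        · exact absurd h' (ne_of_gt hA)
      rw [hpr]
      exact mul_nonneg hKpos.le (hρnn r hr)
    · have hρpos : 0 < ρ r := by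
        rw [hρ r hr]; exact Real.rpow_pos_of_pos h _
      have hpow : ((p r / A) ^ (1 / γ)) ^ γ = p r / A := by
        rw [← Real.rpow_mul hq, one_div_mul_cancel (ne_of_gt hγ0), Real.rpow_one]
      have hpeq : p r = A * (ρ r) ^ γ := by
        rw [hρ r hr, hpow]
        field_simp
      have hexp : (ρ r) ^ γ = (ρ r) ^ (γ - 1) * ρ r := by
        have h2 := (Real.rpow_add hρpos (γ - 1) 1).symm
        rw [Real.rpow_one] at h2
        rw [h2]
        norm_num
      have hple : (ρ r) ^ (γ - 1) ≤ ρM ^ (γ - 1) :=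
        Real.rpow_le_rpow (hρnn r hr) (hρub r hr) (by linarith)
      calc p r = A * ((ρ r) ^ (γ - 1) * ρ r) := by rw [hpeq, hexp]
        _ ≤ A * (ρM ^ (γ - 1) * ρ r) :=
            mul_le_mul_of_nonneg_left (mul_le_mul_of_nonneg_right hple (hρnn r hr)) hA.le
        _ = K * ρ r := by rw [hKdef]; ring
  -- the midpoint and lower bounds on p, ρ on [0, a]
  set a : ℝ := r₀ / 2 with hadef
  have ha0 : 0 < a := half_pos hr₀
  have har : a < r₀ := half_lt_self hr₀
  clear_value a
  have hIccsub : Icc (0:ℝ) a ⊆ Icc (0:ℝ) r₀ := Icc_subset_Icc le_rfl har.le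
  obtain ⟨rc, hrcmem, hrcmin⟩ := isCompact_Icc.exists_isMinOn (nonempty_Icc.2 ha0.le)
    (hpc.mono hIccsub)
  set c : ℝ := p rc with hcdef
  have hcpos : 0 < c := hppos rc ⟨hrcmem.1, lt_of_le_of_lt hrcmem.2 har⟩
  have hcmin : ∀ r ∈ Icc (0:ℝ) a, c ≤ p r := fun r hr => hrcmin hr
  clear_value c
  set cρ : ℝ := (c / A) ^ (1 / γ) with hcρdef
  have hcρpos : 0 < cρ := Real.rpow_pos_of_pos (div_pos hcpos hA) _
  have hcρle : ∀ r ∈ Icc (0:ℝ) a, cρ ≤ ρ r := by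
    intro r hr
    rw [hρ r (hIccsub hr)]
    exact Real.rpow_le_rpow (div_nonneg hcpos.le hA.le)
      (by gcongr; exact hcmin r hr) (le_of_lt (by positivity))
  clear_value cρ
  -- the constants
  set c5 : ℝ := 1 / a with hc5def
  have hc5nn : 0 ≤ c5 := by rw [hc5def]; positivity
  clear_value c5
  set c6 : ℝ := (1 + 2 / a) * K * (1 / a) with hc6def
  have hc6nn : 0 ≤ c6 := by
    rw [hc6def]
    have h2a : (0:ℝ) ≤ 2 / a := div_nonneg two_pos.le ha0.le
    have h1a : (0:ℝ) ≤ 1 / a := one_div_nonneg.2 ha0.le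
    exact mul_nonneg (mul_nonneg (by linarith) hKpos.le) h1a
  clear_value c6
  set Ca : ℝ := 1 + 2 * γ + 2 * c5 + 2 * Mp * (1 / c) * (1 / a) with hCadef
  set Cb : ℝ := 2 * γ * k ^ 2 * K + MJ ^ 2 * (1 / cρ) + 2 * c6 + 2 * Mp * (1 / cρ) * (1 / a)
    with hCbdef
  have hCann : 0 ≤ Ca := by
    have h1 : 0 ≤ 2 * Mp * (1 / c) * (1 / a) := by positivity
    have h2 : 0 ≤ 2 * c5 := by positivity
    rw [hCadef]; linarith only [h1, h2, hγ0]
  have hCbnn : 0 ≤ Cb := by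
    have h1 : 0 ≤ 2 * γ * k ^ 2 * K := by positivity
    have h2 : 0 ≤ MJ ^ 2 * (1 / cρ) := by positivity
    have h3 : 0 ≤ 2 * Mp * (1 / cρ) * (1 / a) := by positivity
    rw [hCbdef]; linarith only [h1, h2, h3, hc6nn]
  clear_value Ca
  clear_value Cb
  have hπnn : (0:ℝ) ≤ 2 * Real.pi ^ 2 := by positivity
  refine ⟨2 * Real.pi ^ 2 * (Ca + Cb) + 1,
    by linarith only [mul_nonneg hπnn (add_nonneg hCann hCbnn)], ?_⟩
  intro ξ η ξ' η' hξd hξ'c hηd hη'c hξ0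
  -- per-pair continuity and bounds
  have hξc : ContinuousOn ξ (Icc 0 r₀) := fun r hr => (hξd r hr).continuousWithinAt
  have hηc : ContinuousOn η (Icc 0 r₀) := fun r hr => (hηd r hr).continuousWithinAt
  obtain ⟨Mx0, hMx0⟩ := isCompact_Icc.exists_bound_of_continuousOn hξ'c
  set Mx : ℝ := max Mx0 0 with hMxdef
  have hMxnn : 0 ≤ Mx := le_max_right _ _
  have hξ'b : ∀ r ∈ Icc (0:ℝ) r₀, |ξ' r| ≤ Mx := fun r hr =>
    le_trans (by simpa [Real.norm_eq_abs] using hMx0 r hr) (le_max_left _ _)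
  clear_value Mx
  have hξb : ∀ r ∈ Icc (0:ℝ) r₀, |ξ r| ≤ Mx * r := by
    intro r hr
    have h0 : (0:ℝ) ∈ Icc (0:ℝ) r₀ := ⟨le_rfl, hr01⟩
    have h := Convex.norm_image_sub_le_of_norm_hasDerivWithin_le hξd
      (fun x hx => by rw [Real.norm_eq_abs]; exact hξ'b x hx) (convex_Icc _ _) h0 hr
    rw [hξ0, sub_zero, sub_zero, Real.norm_eq_abs, Real.norm_eq_abs,
      abs_of_nonneg hr.1] at h
    exact h
  obtain ⟨Mh0, hMh0⟩ := isCompact_Icc.exists_bound_of_continuousOn hηc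
  set Mh : ℝ := max Mh0 0 with hMhdef
  have hMhnn : 0 ≤ Mh := le_max_right _ _
  have hηb : ∀ r ∈ Icc (0:ℝ) r₀, |η r| ≤ Mh := fun r hr =>
    le_trans (by simpa [Real.norm_eq_abs] using hMh0 r hr) (le_max_left _ _)
  clear_value Mh
  -- bounds for the quotient expressions on Ioc
  have hVb : ∀ r ∈ Ioc (0:ℝ) r₀, |(ξ r + r * ξ' r) / r| ≤ 2 * Mx := by
    intro r hr
    rw [abs_div, abs_of_pos hr.1, div_le_iff₀ hr.1]
    calc |ξ r + r * ξ' r| ≤ |ξ r| + |r * ξ' r| := abs_add_le _ _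
      _ ≤ Mx * r + r * Mx := by
          refine add_le_add (hξb r ⟨hr.1.le, hr.2⟩) ?_
          rw [abs_mul, abs_of_pos hr.1]
          exact mul_le_mul_of_nonneg_left (hξ'b r ⟨hr.1.le, hr.2⟩) hr.1.le
      _ = 2 * Mx * r := by ring
  have hDb : ∀ r ∈ Ioc (0:ℝ) r₀, |(r * ξ' r - ξ r) / r| ≤ 2 * Mx := by
    intro r hr
    rw [abs_div, abs_of_pos hr.1, div_le_iff₀ hr.1]
    calc |r * ξ' r - ξ r| ≤ |r * ξ' r| + |ξ r| := abs_sub _ _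
      _ ≤ r * Mx + Mx * r := by
          refine add_le_add ?_ (hξb r ⟨hr.1.le, hr.2⟩)
          rw [abs_mul, abs_of_pos hr.1]
          exact mul_le_mul_of_nonneg_left (hξ'b r ⟨hr.1.le, hr.2⟩) hr.1.le
      _ = 2 * Mx * r := by ring
  have hkηb : ∀ r ∈ Icc (0:ℝ) r₀, |k * η r| ≤ |k| * Mh := by
    intro r hr
    rw [abs_mul]
    exact mul_le_mul_of_nonneg_left (hηb r hr) (abs_nonneg k)
  have hWb : ∀ r ∈ Ioc (0:ℝ) r₀, |k * η r - (r * ξ' r - ξ r) / r| ≤ |k| * Mh + 2 * Mx := by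
    intro r hr
    exact (abs_sub _ _).trans (add_le_add (hkηb r ⟨hr.1.le, hr.2⟩) (hDb r hr))
  have hUb : ∀ r ∈ Ioc (0:ℝ) r₀, |(ξ r + r * ξ' r) / r - k * η r| ≤ 2 * Mx + |k| * Mh := by
    intro r hr
    exact (abs_sub _ _).trans (add_le_add (hVb r hr) (hkηb r ⟨hr.1.le, hr.2⟩))
  have hBbcrude : ∀ r ∈ Ioc (0:ℝ) r₀, |Bθ r| ≤ MJ / 2 * r₀ := fun r hr =>
    (hBb r hr).trans (mul_le_mul_of_nonneg_left hr.2 (div_nonneg hMJnn two_pos.le))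
  -- continuity of the quotient expressions on Ioc
  have hVc : ContinuousOn (fun r => (ξ r + r * ξ' r) / r) (Ioc (0:ℝ) r₀) :=
    ContinuousOn.div ((hξc.mono Ioc_subset_Icc_self).add
      (continuousOn_id.mul (hξ'c.mono Ioc_subset_Icc_self)))
      continuousOn_id (fun r hr => ne_of_gt hr.1)
  have hWc : ContinuousOn (fun r => k * η r - (r * ξ' r - ξ r) / r) (Ioc (0:ℝ) r₀) :=
    (continuousOn_const.mul (hηc.mono Ioc_subset_Icc_self)).sub
      (ContinuousOn.div ((continuousOn_id.mul (hξ'c.mono Ioc_subset_Icc_self)).sub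
        (hξc.mono Ioc_subset_Icc_self)) continuousOn_id (fun r hr => ne_of_gt hr.1))
  have hUc : ContinuousOn (fun r => (ξ r + r * ξ' r) / r - k * η r) (Ioc (0:ℝ) r₀) :=
    hVc.sub (continuousOn_const.mul (hηc.mono Ioc_subset_Icc_self))
  -- integrability of the main integrands
  have hin1 : IntervalIntegrable (fun r => (p r * ((ξ r + r * ξ' r) / r) ^ 2
      + Bθ r ^ 2 * (k * η r - (r * ξ' r - ξ r) / r) ^ 2) * r) volume 0 r₀ := by
    refine zpinch_aux_intable (M := (Mp * (2 * Mx) ^ 2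
        + (MJ / 2 * r₀) ^ 2 * (|k| * Mh + 2 * Mx) ^ 2) * r₀) hr01
      ((((hpc.mono Ioc_subset_Icc_self).mul (hVc.pow 2)).add
        ((hBc.pow 2).mul (hWc.pow 2))).mul continuousOn_id) ?_
    intro r hr
    have hrI : r ∈ Icc (0:ℝ) r₀ := ⟨hr.1.le, hr.2⟩
    have h1 : |p r * ((ξ r + r * ξ' r) / r) ^ 2| ≤ Mp * (2 * Mx) ^ 2 :=
      zpinch_abs_mul_le (by rw [abs_of_nonneg (hpnn r hrI)]; exact hpub r hrI)
        (zpinch_abs_sq_le (hVb r hr))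
    have h2 : |Bθ r ^ 2 * (k * η r - (r * ξ' r - ξ r) / r) ^ 2|
        ≤ (MJ / 2 * r₀) ^ 2 * (|k| * Mh + 2 * Mx) ^ 2 :=
      zpinch_abs_mul_le (zpinch_abs_sq_le (hBbcrude r hr)) (zpinch_abs_sq_le (hWb r hr))
    refine zpinch_abs_mul_le ((abs_add_le _ _).trans (add_le_add h1 h2)) ?_
    rw [abs_of_nonneg hr.1.le]; exact hr.2
  have hin2 : IntervalIntegrable (fun r => ρ r * (ξ r ^ 2 + η r ^ 2) * r) volume 0 r₀ := by
    apply ContinuousOn.intervalIntegrable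
    rw [uIcc_of_le hr01]
    exact (hρc.mul ((hξc.pow 2).add (hηc.pow 2))).mul continuousOn_id
  have hig1 : IntervalIntegrable (fun r => 2 * p' r * ξ r ^ 2) volume 0 r₀ := by
    refine zpinch_aux_intable (M := 2 * (MJ ^ 2 / 2 * r₀) * (Mx * r₀) ^ 2) hr01
      ((continuousOn_const.mul hp'cIoc).mul ((hξc.mono Ioc_subset_Icc_self).pow 2)) ?_
    intro r hr
    have hrI : r ∈ Icc (0:ℝ) r₀ := ⟨hr.1.le, hr.2⟩
    refine zpinch_abs_mul_le (zpinch_abs_mul_le (by norm_num) ?_) (zpinch_abs_sq_le ?_)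
    · exact (hp'b r hrI).trans (mul_le_mul_of_nonneg_left hr.2
        (div_nonneg (sq_nonneg MJ) two_pos.le))
    · exact (hξb r hrI).trans (mul_le_mul_of_nonneg_left hr.2 hMxnn)
  have hig2 : IntervalIntegrable (fun r => Bθ r ^ 2 * (k * η r - (r * ξ' r - ξ r) / r) ^ 2 * r)
      volume 0 r₀ := by
    refine zpinch_aux_intable (M := (MJ / 2 * r₀) ^ 2 * (|k| * Mh + 2 * Mx) ^ 2 * r₀) hr01
      (((hBc.pow 2).mul (hWc.pow 2)).mul continuousOn_id) ?_
    intro r hr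
    refine zpinch_abs_mul_le (zpinch_abs_mul_le (zpinch_abs_sq_le (hBbcrude r hr))
      (zpinch_abs_sq_le (hWb r hr))) ?_
    rw [abs_of_nonneg hr.1.le]; exact hr.2
  have hig3 : IntervalIntegrable (fun r => γ * p r * ((ξ r + r * ξ' r) / r - k * η r) ^ 2 * r)
      volume 0 r₀ := by
    refine zpinch_aux_intable (M := |γ| * Mp * (2 * Mx + |k| * Mh) ^ 2 * r₀) hr01
      (((continuousOn_const.mul (hpc.mono Ioc_subset_Icc_self)).mul (hUc.pow 2)).mul
        continuousOn_id) ?_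
    intro r hr
    have hrI : r ∈ Icc (0:ℝ) r₀ := ⟨hr.1.le, hr.2⟩
    refine zpinch_abs_mul_le (zpinch_abs_mul_le (zpinch_abs_mul_le le_rfl ?_)
      (zpinch_abs_sq_le (hUb r hr))) ?_
    · rw [abs_of_nonneg (hpnn r hrI)]; exact hpub r hrI
    · rw [abs_of_nonneg hr.1.le]; exact hr.2
  -- subinterval inclusions
  have hsub1 : uIcc (0:ℝ) a ⊆ uIcc (0:ℝ) r₀ := by
    rw [uIcc_of_le ha0.le, uIcc_of_le hr01]; exact Icc_subset_Icc le_rfl har.le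
  have hsub2 : uIcc a r₀ ⊆ uIcc (0:ℝ) r₀ := by
    rw [uIcc_of_le har.le, uIcc_of_le hr01]; exact Icc_subset_Icc ha0.le le_rfl
  have hIccsub2 : Icc a r₀ ⊆ Icc (0:ℝ) r₀ := Icc_subset_Icc ha0.le le_rfl
  have hIoc2 : Icc a r₀ ⊆ Ioc (0:ℝ) r₀ := fun x hx => ⟨lt_of_lt_of_le ha0 hx.1, hx.2⟩
  -- pointwise nonnegativity
  have hn1nn : ∀ r ∈ Icc (0:ℝ) r₀, 0 ≤ (p r * ((ξ r + r * ξ' r) / r) ^ 2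
      + Bθ r ^ 2 * (k * η r - (r * ξ' r - ξ r) / r) ^ 2) * r := fun r hr =>
    mul_nonneg (add_nonneg (mul_nonneg (hpnn r hr) (sq_nonneg _))
      (mul_nonneg (sq_nonneg _) (sq_nonneg _))) hr.1
  have hn2nn : ∀ r ∈ Icc (0:ℝ) r₀, 0 ≤ ρ r * (ξ r ^ 2 + η r ^ 2) * r := fun r hr =>
    mul_nonneg (mul_nonneg (hρnn r hr) (add_nonneg (sq_nonneg _) (sq_nonneg _))) hr.1
  have hg2nn : ∀ r ∈ Icc (0:ℝ) r₀,
      0 ≤ Bθ r ^ 2 * (k * η r - (r * ξ' r - ξ r) / r) ^ 2 * r :=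
    fun r hr => mul_nonneg (mul_nonneg (sq_nonneg _) (sq_nonneg _)) hr.1
  have hg3nn : ∀ r ∈ Icc (0:ℝ) r₀,
      0 ≤ γ * p r * ((ξ r + r * ξ' r) / r - k * η r) ^ 2 * r :=
    fun r hr => mul_nonneg (mul_nonneg (mul_nonneg hγ0.le (hpnn r hr)) (sq_nonneg _)) hr.1
  -- splittings of the norm integrals
  have hadj1 : (∫ r in (0:ℝ)..a, 2 * p' r * ξ r ^ 2) + (∫ r in a..r₀, 2 * p' r * ξ r ^ 2)
      = ∫ r in (0:ℝ)..r₀, 2 * p' r * ξ r ^ 2 :=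
    intervalIntegral.integral_add_adjacent_intervals (hig1.mono_set hsub1) (hig1.mono_set hsub2)
  have hadjn1 : (∫ r in (0:ℝ)..a, (p r * ((ξ r + r * ξ' r) / r) ^ 2
        + Bθ r ^ 2 * (k * η r - (r * ξ' r - ξ r) / r) ^ 2) * r)
      + (∫ r in a..r₀, (p r * ((ξ r + r * ξ' r) / r) ^ 2
        + Bθ r ^ 2 * (k * η r - (r * ξ' r - ξ r) / r) ^ 2) * r)
      = ∫ r in (0:ℝ)..r₀, (p r * ((ξ r + r * ξ' r) / r) ^ 2
        + Bθ r ^ 2 * (k * η r - (r * ξ' r - ξ r) / r) ^ 2) * r :=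
    intervalIntegral.integral_add_adjacent_intervals (hin1.mono_set hsub1) (hin1.mono_set hsub2)
  have hadjn2 : (∫ r in (0:ℝ)..a, ρ r * (ξ r ^ 2 + η r ^ 2) * r)
      + (∫ r in a..r₀, ρ r * (ξ r ^ 2 + η r ^ 2) * r)
      = ∫ r in (0:ℝ)..r₀, ρ r * (ξ r ^ 2 + η r ^ 2) * r :=
    intervalIntegral.integral_add_adjacent_intervals (hin2.mono_set hsub1) (hin2.mono_set hsub2)
  have h0an1nn : 0 ≤ ∫ r in (0:ℝ)..a, (p r * ((ξ r + r * ξ' r) / r) ^ 2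
      + Bθ r ^ 2 * (k * η r - (r * ξ' r - ξ r) / r) ^ 2) * r :=
    intervalIntegral.integral_nonneg ha0.le (fun r hr => hn1nn r (hIccsub hr))
  have harn1nn : 0 ≤ ∫ r in a..r₀, (p r * ((ξ r + r * ξ' r) / r) ^ 2
      + Bθ r ^ 2 * (k * η r - (r * ξ' r - ξ r) / r) ^ 2) * r :=
    intervalIntegral.integral_nonneg har.le (fun r hr => hn1nn r (hIccsub2 hr))
  have h0an2nn : 0 ≤ ∫ r in (0:ℝ)..a, ρ r * (ξ r ^ 2 + η r ^ 2) * r :=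
    intervalIntegral.integral_nonneg ha0.le (fun r hr => hn2nn r (hIccsub hr))
  have harn2nn : 0 ≤ ∫ r in a..r₀, ρ r * (ξ r ^ 2 + η r ^ 2) * r :=
    intervalIntegral.integral_nonneg har.le (fun r hr => hn2nn r (hIccsub2 hr))
  have hN1nn : 0 ≤ ∫ r in (0:ℝ)..r₀, (p r * ((ξ r + r * ξ' r) / r) ^ 2
      + Bθ r ^ 2 * (k * η r - (r * ξ' r - ξ r) / r) ^ 2) * r :=
    intervalIntegral.integral_nonneg hr01 hn1nn
  have hN2nn : 0 ≤ ∫ r in (0:ℝ)..r₀, ρ r * (ξ r ^ 2 + η r ^ 2) * r :=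
    intervalIntegral.integral_nonneg hr01 hn2nn
  -- pointwise estimates
  have hP4 : ∀ r ∈ Icc (0:ℝ) r₀, Bθ r ^ 2 * (k * η r - (r * ξ' r - ξ r) / r) ^ 2 * r
      ≤ (p r * ((ξ r + r * ξ' r) / r) ^ 2
        + Bθ r ^ 2 * (k * η r - (r * ξ' r - ξ r) / r) ^ 2) * r := by
    intro r hr
    linarith only [mul_nonneg (mul_nonneg (hpnn r hr) (sq_nonneg ((ξ r + r * ξ' r) / r))) hr.1]
  have hP7 : ∀ r ∈ Icc (0:ℝ) r₀, γ * p r * ((ξ r + r * ξ' r) / r - k * η r) ^ 2 * r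
      ≤ 2 * γ * ((p r * ((ξ r + r * ξ' r) / r) ^ 2
          + Bθ r ^ 2 * (k * η r - (r * ξ' r - ξ r) / r) ^ 2) * r)
        + 2 * γ * k ^ 2 * K * (ρ r * (ξ r ^ 2 + η r ^ 2) * r) := by
    intro r hr
    set V : ℝ := (ξ r + r * ξ' r) / r with hVdef
    clear_value V
    have h1 : (V - k * η r) ^ 2 ≤ 2 * V ^ 2 + 2 * k ^ 2 * η r ^ 2 := by
      nlinarith only [sq_nonneg (V + k * η r)]
    have hc0 : 0 ≤ γ * p r * r := mul_nonneg (mul_nonneg hγ0.le (hpnn r hr)) hr.1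
    have h2 : γ * p r * (V - k * η r) ^ 2 * r
        ≤ 2 * γ * (p r * V ^ 2 * r) + 2 * γ * k ^ 2 * (p r * η r ^ 2 * r) := by
      linarith only [mul_le_mul_of_nonneg_left h1 hc0]
    have h3 : p r * V ^ 2 * r ≤ (p r * V ^ 2
        + Bθ r ^ 2 * (k * η r - (r * ξ' r - ξ r) / r) ^ 2) * r := by
      linarith only [mul_nonneg (mul_nonneg (sq_nonneg (Bθ r))
        (sq_nonneg (k * η r - (r * ξ' r - ξ r) / r))) hr.1]
    have h4 : p r * η r ^ 2 * r ≤ K * (ρ r * (ξ r ^ 2 + η r ^ 2) * r) := by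
      linarith only [mul_le_mul_of_nonneg_right
          (mul_le_mul_of_nonneg_right (hpK r hr) (sq_nonneg (η r))) hr.1,
        mul_nonneg (mul_nonneg (mul_nonneg hKpos.le (hρnn r hr)) (sq_nonneg (ξ r))) hr.1]
    have h5 : 2 * γ * (p r * V ^ 2 * r) ≤ 2 * γ * ((p r * V ^ 2
        + Bθ r ^ 2 * (k * η r - (r * ξ' r - ξ r) / r) ^ 2) * r) :=
      mul_le_mul_of_nonneg_left h3 (by linarith only [hγ0])
    have h6 : 2 * γ * k ^ 2 * (p r * η r ^ 2 * r)
        ≤ 2 * γ * k ^ 2 * (K * (ρ r * (ξ r ^ 2 + η r ^ 2) * r)) :=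
      mul_le_mul_of_nonneg_left h4 (mul_nonneg (by linarith only [hγ0]) (sq_nonneg k))
    linarith only [h2, h5, h6]
  have hPin : ∀ r ∈ Icc (0:ℝ) a, |2 * p' r * ξ r ^ 2|
      ≤ MJ ^ 2 * (1 / cρ) * (ρ r * (ξ r ^ 2 + η r ^ 2) * r) := by
    intro r hr
    have hrI : r ∈ Icc (0:ℝ) r₀ := hIccsub hr
    have h1 : |2 * p' r * ξ r ^ 2| = 2 * |p' r| * ξ r ^ 2 := by
      rw [abs_mul, abs_mul, abs_two, abs_of_nonneg (sq_nonneg (ξ r))]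
    have h2 : 2 * |p' r| * ξ r ^ 2 ≤ 2 * (MJ ^ 2 / 2 * r) * ξ r ^ 2 :=
      mul_le_mul_of_nonneg_right
        (mul_le_mul_of_nonneg_left (hp'b r hrI) two_pos.le) (sq_nonneg _)
    have h3 : cρ * (r * ξ r ^ 2) ≤ ρ r * (ξ r ^ 2 + η r ^ 2) * r := by
      linarith only [mul_nonneg (mul_nonneg (sub_nonneg.2 (hcρle r hr)) (sq_nonneg (ξ r))) hr.1,
        mul_nonneg (mul_nonneg (hρnn r hrI) (sq_nonneg (η r))) hr.1]
    have h4 : r * ξ r ^ 2 ≤ 1 / cρ * (ρ r * (ξ r ^ 2 + η r ^ 2) * r) := by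
      rw [one_div_mul_eq_div, le_div_iff₀ hcρpos]
      linarith only [h3]
    calc |2 * p' r * ξ r ^ 2| = 2 * |p' r| * ξ r ^ 2 := h1
      _ ≤ 2 * (MJ ^ 2 / 2 * r) * ξ r ^ 2 := h2
      _ = MJ ^ 2 * (r * ξ r ^ 2) := by ring
      _ ≤ MJ ^ 2 * (1 / cρ * (ρ r * (ξ r ^ 2 + η r ^ 2) * r)) :=
          mul_le_mul_of_nonneg_left h4 (sq_nonneg MJ)
      _ = MJ ^ 2 * (1 / cρ) * (ρ r * (ξ r ^ 2 + η r ^ 2) * r) := by ring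
  have hPout : ∀ r ∈ Icc a r₀, |p r * (2 * ξ r * ξ' r)|
      ≤ c5 * ((p r * ((ξ r + r * ξ' r) / r) ^ 2
          + Bθ r ^ 2 * (k * η r - (r * ξ' r - ξ r) / r) ^ 2) * r)
        + c6 * (ρ r * (ξ r ^ 2 + η r ^ 2) * r) := by
    intro r hr
    have hr0 : 0 < r := lt_of_lt_of_le ha0 hr.1
    have hra : a ≤ r := hr.1
    have hrI : r ∈ Icc (0:ℝ) r₀ := ⟨hr0.le, hr.2⟩
    set V : ℝ := (ξ r + r * ξ' r) / r with hVdef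
    have hrV : r * V = ξ r + r * ξ' r := by
      rw [hVdef]; field_simp
    clear_value V
    rw [← mul_le_mul_iff_right₀ hr0]
    have hL : r * |p r * (2 * ξ r * ξ' r)| = |p r * (2 * ξ r * (r * V) - 2 * ξ r ^ 2)| := by
      rw [show p r * (2 * ξ r * (r * V) - 2 * ξ r ^ 2) = r * (p r * (2 * ξ r * ξ' r)) from by
        linear_combination (2 * p r * ξ r) * hrV]
      rw [abs_mul r (p r * (2 * ξ r * ξ' r)), abs_of_pos hr0]
    rw [hL]
    have habs : |p r * (2 * ξ r * (r * V) - 2 * ξ r ^ 2)|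
        ≤ p r * (r * (ξ r ^ 2 + V ^ 2) + 2 * ξ r ^ 2) := by
      rw [abs_mul, abs_of_nonneg (hpnn r hrI)]
      refine mul_le_mul_of_nonneg_left ?_ (hpnn r hrI)
      have e1 : |2 * ξ r * (r * V)| = r * (2 * (|ξ r| * |V|)) := by
        rw [abs_mul, abs_mul, abs_two, abs_mul, abs_of_pos hr0]; ring
      have e2 : |2 * ξ r ^ 2| = 2 * ξ r ^ 2 :=
        abs_of_nonneg (mul_nonneg two_pos.le (sq_nonneg _))
      have e3 : 2 * (|ξ r| * |V|) ≤ ξ r ^ 2 + V ^ 2 := by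
        nlinarith only [sq_nonneg (|ξ r| - |V|), sq_abs (ξ r), sq_abs V]
      calc |2 * ξ r * (r * V) - 2 * ξ r ^ 2| ≤ |2 * ξ r * (r * V)| + |2 * ξ r ^ 2| :=
            abs_sub _ _
        _ = r * (2 * (|ξ r| * |V|)) + 2 * ξ r ^ 2 := by rw [e1, e2]
        _ ≤ r * (ξ r ^ 2 + V ^ 2) + 2 * ξ r ^ 2 :=
            add_le_add (mul_le_mul_of_nonneg_left e3 hr0.le) le_rfl
    refine habs.trans ?_
    have hBW : 0 ≤ Bθ r ^ 2 * (k * η r - (r * ξ' r - ξ r) / r) ^ 2 :=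
      mul_nonneg (sq_nonneg _) (sq_nonneg _)
    have hge1 : (1:ℝ) ≤ c5 * r := by
      rw [hc5def, one_div_mul_eq_div, le_div_iff₀ ha0]
      linarith only [hra]
    have h1 : p r * V ^ 2 * r ≤ c5 * (p r * V ^ 2 * r) * r := by
      have hX : 0 ≤ p r * V ^ 2 * r := mul_nonneg (mul_nonneg (hpnn r hrI) (sq_nonneg _)) hr0.le
      linarith only [mul_nonneg hX (sub_nonneg.2 hge1)]
    have hpξ : p r * ξ r ^ 2 ≤ K * (ρ r * ξ r ^ 2) := by
      linarith only [mul_le_mul_of_nonneg_right (hpK r hrI) (sq_nonneg (ξ r))]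
    have hr2 : r + 2 ≤ (1 + 2 / a) * (1 / a) * r ^ 2 := by
      have hane : a ≠ 0 := ne_of_gt ha0
      have ha1 : r ≤ 1 / a * r ^ 2 := by
        rw [one_div_mul_eq_div, le_div_iff₀ ha0]
        nlinarith only [hra, hr0.le]
      have haa : a ^ 2 ≤ r ^ 2 := by nlinarith only [hra, ha0.le]
      have hkey : 2 / a * (1 / a * r ^ 2) = 2 * r ^ 2 / a ^ 2 := by
        field_simp
      have ha2 : (2:ℝ) ≤ 2 / a * (1 / a * r ^ 2) := by
        rw [hkey, le_div_iff₀ (by positivity : (0:ℝ) < a ^ 2)]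
        linarith only [haa]
      have hexp : (1 + 2 / a) * (1 / a) * r ^ 2 = 1 / a * r ^ 2 + 2 / a * (1 / a * r ^ 2) := by
        ring
      linarith only [ha1, ha2, hexp]
    have h2 : p r * ξ r ^ 2 * (r + 2) ≤ c6 * (ρ r * ξ r ^ 2 * r) * r := by
      have hρξnn : 0 ≤ ρ r * ξ r ^ 2 := mul_nonneg (hρnn r hrI) (sq_nonneg _)
      calc p r * ξ r ^ 2 * (r + 2) ≤ K * (ρ r * ξ r ^ 2) * (r + 2) :=
            mul_le_mul_of_nonneg_right hpξ (by linarith only [hr0])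
        _ ≤ K * (ρ r * ξ r ^ 2) * ((1 + 2 / a) * (1 / a) * r ^ 2) :=
            mul_le_mul_of_nonneg_left hr2 (mul_nonneg hKpos.le hρξnn)
        _ = c6 * (ρ r * ξ r ^ 2 * r) * r := by rw [hc6def]; ring
    have h3 : c6 * (ρ r * ξ r ^ 2 * r) * r ≤ c6 * (ρ r * (ξ r ^ 2 + η r ^ 2) * r) * r := by
      linarith only [mul_nonneg (mul_nonneg (mul_nonneg hc6nn (hρnn r hrI)) (sq_nonneg (η r)))
        (mul_nonneg hr0.le hr0.le)]
    have h4 : c5 * (p r * V ^ 2 * r) * r ≤ c5 * ((p r * V ^ 2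
        + Bθ r ^ 2 * (k * η r - (r * ξ' r - ξ r) / r) ^ 2) * r) * r := by
      linarith only [mul_nonneg (mul_nonneg (mul_nonneg hc5nn hBW) hr0.le) hr0.le]
    linarith only [h1, h2, h3, h4]
  have hHpt : ∀ r ∈ Icc (0:ℝ) a, ξ r ^ 2 + r * (2 * ξ r * ξ' r)
      ≤ 1 / c * ((p r * ((ξ r + r * ξ' r) / r) ^ 2
          + Bθ r ^ 2 * (k * η r - (r * ξ' r - ξ r) / r) ^ 2) * r)
        + 1 / cρ * (ρ r * (ξ r ^ 2 + η r ^ 2) * r) := by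
    intro r hr
    rcases eq_or_lt_of_le hr.1 with h | hr0
    · rw [← h]
      simp [hξ0]
    · have hrI : r ∈ Icc (0:ℝ) r₀ := hIccsub hr
      set V : ℝ := (ξ r + r * ξ' r) / r with hVdef
      have hrV : r * V = ξ r + r * ξ' r := by rw [hVdef]; field_simp
      clear_value V
      have h1 : ξ r ^ 2 + r * (2 * ξ r * ξ' r) = 2 * ξ r * (r * V) - ξ r ^ 2 := by
        linear_combination (-(2 * ξ r)) * hrV
      have h2 : 2 * ξ r * (r * V) ≤ r * ξ r ^ 2 + r * V ^ 2 := by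
        nlinarith only [mul_nonneg hr0.le (sq_nonneg (ξ r - V))]
      have h3 : cρ * (r * ξ r ^ 2) ≤ ρ r * (ξ r ^ 2 + η r ^ 2) * r := by
        linarith only [mul_nonneg (mul_nonneg (sub_nonneg.2 (hcρle r hr)) (sq_nonneg (ξ r))) hr0.le,
          mul_nonneg (mul_nonneg (hρnn r hrI) (sq_nonneg (η r))) hr0.le]
      have h4 : r * ξ r ^ 2 ≤ 1 / cρ * (ρ r * (ξ r ^ 2 + η r ^ 2) * r) := by
        rw [one_div_mul_eq_div, le_div_iff₀ hcρpos]
        linarith only [h3]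
      have h5 : c * (r * V ^ 2) ≤ (p r * V ^ 2
          + Bθ r ^ 2 * (k * η r - (r * ξ' r - ξ r) / r) ^ 2) * r := by
        linarith only [mul_nonneg (mul_nonneg (sub_nonneg.2 (hcmin r hr)) (sq_nonneg V)) hr0.le,
          mul_nonneg (mul_nonneg (sq_nonneg (Bθ r))
            (sq_nonneg (k * η r - (r * ξ' r - ξ r) / r))) hr0.le]
      have h6 : r * V ^ 2 ≤ 1 / c * ((p r * V ^ 2
          + Bθ r ^ 2 * (k * η r - (r * ξ' r - ξ r) / r) ^ 2) * r) := by
        rw [one_div_mul_eq_div, le_div_iff₀ hcpos]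
        linarith only [h5]
      linarith only [h1, h2, h4, h6, sq_nonneg (ξ r)]
  -- the two fundamental theorem of calculus identities
  have hintH : IntervalIntegrable (fun r => ξ r ^ 2 + r * (2 * ξ r * ξ' r)) volume 0 a := by
    apply ContinuousOn.intervalIntegrable
    rw [uIcc_of_le ha0.le]
    exact ((hξc.mono hIccsub).pow 2).add (continuousOn_id.mul
      ((continuousOn_const.mul (hξc.mono hIccsub)).mul (hξ'c.mono hIccsub)))
  have hFTC1 : (∫ r in (0:ℝ)..a, (ξ r ^ 2 + r * (2 * ξ r * ξ' r))) = a * ξ a ^ 2 := by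
    have hcont : ContinuousOn (fun r => r * ξ r ^ 2) (Icc 0 a) :=
      continuousOn_id.mul ((hξc.mono hIccsub).pow 2)
    have hderiv : ∀ x ∈ Ioo (0:ℝ) a, HasDerivWithinAt (fun r => r * ξ r ^ 2)
        (ξ x ^ 2 + x * (2 * ξ x * ξ' x)) (Ioi x) x := by
      intro x hx
      have hxI : x ∈ Icc (0:ℝ) r₀ := ⟨hx.1.le, (hx.2.trans har).le⟩
      have hξx : HasDerivAt ξ (ξ' x) x := (hξd x hxI).hasDerivAt
        (Icc_mem_nhds hx.1 (hx.2.trans har))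
      have h := (hasDerivAt_id x).mul (hξx.pow 2)
      have h2 : HasDerivAt (fun r => r * ξ r ^ 2) (ξ x ^ 2 + x * (2 * ξ x * ξ' x)) x := by
        refine h.congr_deriv ?_
        push_cast
        simp only [id_eq, Pi.pow_apply, Nat.cast_ofNat, show (2:ℕ) - 1 = 1 from rfl, pow_one]
        ring
      exact h2.hasDerivWithinAt
    have h := intervalIntegral.integral_eq_sub_of_hasDeriv_right_of_le ha0.le hcont hderiv hintH
    rw [h]
    simp [hξ0]
  have hiQ : IntervalIntegrable (fun r => p r * (2 * ξ r * ξ' r)) volume a r₀ := by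
    apply ContinuousOn.intervalIntegrable
    rw [uIcc_of_le har.le]
    exact (hpc.mono hIccsub2).mul
      ((continuousOn_const.mul (hξc.mono hIccsub2)).mul (hξ'c.mono hIccsub2))
  have hiP : IntervalIntegrable (fun r => p' r * ξ r ^ 2) volume a r₀ := by
    apply ContinuousOn.intervalIntegrable
    rw [uIcc_of_le har.le]
    exact (hp'cIoc.mono hIoc2).mul ((hξc.mono hIccsub2).pow 2)
  have hFTC2 : (∫ r in a..r₀, (p' r * ξ r ^ 2 + p r * (2 * ξ r * ξ' r))) = -(p a * ξ a ^ 2) := by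
    have hcont : ContinuousOn (fun r => p r * ξ r ^ 2) (Icc a r₀) :=
      (hpc.mono hIccsub2).mul ((hξc.mono hIccsub2).pow 2)
    have hderiv : ∀ x ∈ Ioo a r₀, HasDerivWithinAt (fun r => p r * ξ r ^ 2)
        (p' x * ξ x ^ 2 + p x * (2 * ξ x * ξ' x)) (Ioi x) x := by
      intro x hx
      have hx0 : (0:ℝ) < x := lt_trans ha0 hx.1
      have hxI : x ∈ Icc (0:ℝ) r₀ := ⟨hx0.le, hx.2.le⟩
      have hmem : Icc (0:ℝ) r₀ ∈ nhds x := Icc_mem_nhds hx0 hx.2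
      have hpx : HasDerivAt p (p' x) x := (hp x hxI).hasDerivAt hmem
      have hξx : HasDerivAt ξ (ξ' x) x := (hξd x hxI).hasDerivAt hmem
      have h := hpx.mul (hξx.pow 2)
      have h2 : HasDerivAt (fun r => p r * ξ r ^ 2)
          (p' x * ξ x ^ 2 + p x * (2 * ξ x * ξ' x)) x := by
        refine h.congr_deriv ?_
        push_cast
        simp only [Pi.pow_apply, pow_one]
      exact h2.hasDerivWithinAt
    have hint : IntervalIntegrable (fun r => p' r * ξ r ^ 2 + p r * (2 * ξ r * ξ' r))
        volume a r₀ := hiP.add hiQ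
    have h := intervalIntegral.integral_eq_sub_of_hasDeriv_right_of_le har.le hcont hderiv hint
    rw [h, hpr₀]
    ring
  -- decompose the energy integral
  have hIdecomp : (∫ r in (0:ℝ)..r₀,
        (2 * p' r * ξ r ^ 2 / r + Bθ r ^ 2 * (k * η r - (r * ξ' r - ξ r) / r) ^ 2
          + γ * p r * ((ξ r + r * ξ' r) / r - k * η r) ^ 2) * r)
      = (∫ r in (0:ℝ)..r₀, 2 * p' r * ξ r ^ 2)
        + ((∫ r in (0:ℝ)..r₀, Bθ r ^ 2 * (k * η r - (r * ξ' r - ξ r) / r) ^ 2 * r)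
          + (∫ r in (0:ℝ)..r₀, γ * p r * ((ξ r + r * ξ' r) / r - k * η r) ^ 2 * r)) := by
    rw [← intervalIntegral.integral_add hig2 hig3,
      ← intervalIntegral.integral_add hig1 (hig2.add hig3)]
    apply intervalIntegral.integral_congr
    intro r hr
    rcases eq_or_ne r 0 with h | h
    · subst h
      simp [hξ0]
    · field_simp
      ring
  -- the four integral estimates
  have hS3 : |∫ r in (0:ℝ)..r₀, Bθ r ^ 2 * (k * η r - (r * ξ' r - ξ r) / r) ^ 2 * r|
      ≤ ∫ r in (0:ℝ)..r₀, (p r * ((ξ r + r * ξ' r) / r) ^ 2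
        + Bθ r ^ 2 * (k * η r - (r * ξ' r - ξ r) / r) ^ 2) * r := by
    rw [abs_of_nonneg (intervalIntegral.integral_nonneg hr01 hg2nn)]
    exact intervalIntegral.integral_mono_on hr01 hig2 hin1 hP4
  have hS4 : |∫ r in (0:ℝ)..r₀, γ * p r * ((ξ r + r * ξ' r) / r - k * η r) ^ 2 * r|
      ≤ 2 * γ * (∫ r in (0:ℝ)..r₀, (p r * ((ξ r + r * ξ' r) / r) ^ 2
          + Bθ r ^ 2 * (k * η r - (r * ξ' r - ξ r) / r) ^ 2) * r)
        + 2 * γ * k ^ 2 * K * (∫ r in (0:ℝ)..r₀, ρ r * (ξ r ^ 2 + η r ^ 2) * r) := by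
    rw [abs_of_nonneg (intervalIntegral.integral_nonneg hr01 hg3nn)]
    calc (∫ r in (0:ℝ)..r₀, γ * p r * ((ξ r + r * ξ' r) / r - k * η r) ^ 2 * r)
        ≤ ∫ r in (0:ℝ)..r₀, (2 * γ * ((p r * ((ξ r + r * ξ' r) / r) ^ 2
            + Bθ r ^ 2 * (k * η r - (r * ξ' r - ξ r) / r) ^ 2) * r)
          + 2 * γ * k ^ 2 * K * (ρ r * (ξ r ^ 2 + η r ^ 2) * r)) :=
          intervalIntegral.integral_mono_on hr01 hig3
            ((hin1.const_mul _).add (hin2.const_mul _)) hP7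
      _ = 2 * γ * (∫ r in (0:ℝ)..r₀, (p r * ((ξ r + r * ξ' r) / r) ^ 2
            + Bθ r ^ 2 * (k * η r - (r * ξ' r - ξ r) / r) ^ 2) * r)
          + 2 * γ * k ^ 2 * K * (∫ r in (0:ℝ)..r₀, ρ r * (ξ r ^ 2 + η r ^ 2) * r) := by
          rw [intervalIntegral.integral_add (hin1.const_mul _) (hin2.const_mul _),
            intervalIntegral.integral_const_mul, intervalIntegral.integral_const_mul]
  have hS1 : |∫ r in (0:ℝ)..a, 2 * p' r * ξ r ^ 2|
      ≤ MJ ^ 2 * (1 / cρ) * (∫ r in (0:ℝ)..r₀, ρ r * (ξ r ^ 2 + η r ^ 2) * r) := by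
    refine (intervalIntegral.abs_integral_le_integral_abs ha0.le).trans ?_
    calc (∫ r in (0:ℝ)..a, |2 * p' r * ξ r ^ 2|)
        ≤ ∫ r in (0:ℝ)..a, MJ ^ 2 * (1 / cρ) * (ρ r * (ξ r ^ 2 + η r ^ 2) * r) :=
          intervalIntegral.integral_mono_on ha0.le (hig1.mono_set hsub1).abs
            ((hin2.mono_set hsub1).const_mul _) hPin
      _ = MJ ^ 2 * (1 / cρ) * ∫ r in (0:ℝ)..a, ρ r * (ξ r ^ 2 + η r ^ 2) * r :=
          intervalIntegral.integral_const_mul _ _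
      _ ≤ MJ ^ 2 * (1 / cρ) * ∫ r in (0:ℝ)..r₀, ρ r * (ξ r ^ 2 + η r ^ 2) * r := by
          refine mul_le_mul_of_nonneg_left ?_ (by positivity)
          linarith only [hadjn2, harn2nn]
  have hHardy : a * ξ a ^ 2 ≤ 1 / c * (∫ r in (0:ℝ)..r₀, (p r * ((ξ r + r * ξ' r) / r) ^ 2
        + Bθ r ^ 2 * (k * η r - (r * ξ' r - ξ r) / r) ^ 2) * r)
      + 1 / cρ * (∫ r in (0:ℝ)..r₀, ρ r * (ξ r ^ 2 + η r ^ 2) * r) := by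
    rw [← hFTC1]
    calc (∫ r in (0:ℝ)..a, (ξ r ^ 2 + r * (2 * ξ r * ξ' r)))
        ≤ ∫ r in (0:ℝ)..a, (1 / c * ((p r * ((ξ r + r * ξ' r) / r) ^ 2
            + Bθ r ^ 2 * (k * η r - (r * ξ' r - ξ r) / r) ^ 2) * r)
          + 1 / cρ * (ρ r * (ξ r ^ 2 + η r ^ 2) * r)) :=
          intervalIntegral.integral_mono_on ha0.le hintH
            (((hin1.mono_set hsub1).const_mul _).add ((hin2.mono_set hsub1).const_mul _)) hHpt
      _ = 1 / c * (∫ r in (0:ℝ)..a, (p r * ((ξ r + r * ξ' r) / r) ^ 2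
            + Bθ r ^ 2 * (k * η r - (r * ξ' r - ξ r) / r) ^ 2) * r)
          + 1 / cρ * (∫ r in (0:ℝ)..a, ρ r * (ξ r ^ 2 + η r ^ 2) * r) := by
          rw [intervalIntegral.integral_add ((hin1.mono_set hsub1).const_mul _)
            ((hin2.mono_set hsub1).const_mul _), intervalIntegral.integral_const_mul,
            intervalIntegral.integral_const_mul]
      _ ≤ 1 / c * (∫ r in (0:ℝ)..r₀, (p r * ((ξ r + r * ξ' r) / r) ^ 2
            + Bθ r ^ 2 * (k * η r - (r * ξ' r - ξ r) / r) ^ 2) * r)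
          + 1 / cρ * (∫ r in (0:ℝ)..r₀, ρ r * (ξ r ^ 2 + η r ^ 2) * r) := by
          refine add_le_add (mul_le_mul_of_nonneg_left ?_ (by positivity))
            (mul_le_mul_of_nonneg_left ?_ (by positivity))
          · linarith only [hadjn1, harn1nn]
          · linarith only [hadjn2, harn2nn]
  have hξa2 : ξ a ^ 2 ≤ 1 / a * (1 / c * (∫ r in (0:ℝ)..r₀, (p r * ((ξ r + r * ξ' r) / r) ^ 2
        + Bθ r ^ 2 * (k * η r - (r * ξ' r - ξ r) / r) ^ 2) * r)
      + 1 / cρ * (∫ r in (0:ℝ)..r₀, ρ r * (ξ r ^ 2 + η r ^ 2) * r)) := by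
    rw [one_div_mul_eq_div, le_div_iff₀ ha0]
    linarith only [hHardy]
  have hQb : |∫ r in a..r₀, p r * (2 * ξ r * ξ' r)|
      ≤ c5 * (∫ r in (0:ℝ)..r₀, (p r * ((ξ r + r * ξ' r) / r) ^ 2
          + Bθ r ^ 2 * (k * η r - (r * ξ' r - ξ r) / r) ^ 2) * r)
        + c6 * (∫ r in (0:ℝ)..r₀, ρ r * (ξ r ^ 2 + η r ^ 2) * r) := by
    refine (intervalIntegral.abs_integral_le_integral_abs har.le).trans ?_
    calc (∫ r in a..r₀, |p r * (2 * ξ r * ξ' r)|)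
        ≤ ∫ r in a..r₀, (c5 * ((p r * ((ξ r + r * ξ' r) / r) ^ 2
            + Bθ r ^ 2 * (k * η r - (r * ξ' r - ξ r) / r) ^ 2) * r)
          + c6 * (ρ r * (ξ r ^ 2 + η r ^ 2) * r)) :=
          intervalIntegral.integral_mono_on har.le hiQ.abs
            (((hin1.mono_set hsub2).const_mul _).add ((hin2.mono_set hsub2).const_mul _)) hPout
      _ = c5 * (∫ r in a..r₀, (p r * ((ξ r + r * ξ' r) / r) ^ 2
            + Bθ r ^ 2 * (k * η r - (r * ξ' r - ξ r) / r) ^ 2) * r)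
          + c6 * (∫ r in a..r₀, ρ r * (ξ r ^ 2 + η r ^ 2) * r) := by
          rw [intervalIntegral.integral_add ((hin1.mono_set hsub2).const_mul _)
            ((hin2.mono_set hsub2).const_mul _), intervalIntegral.integral_const_mul,
            intervalIntegral.integral_const_mul]
      _ ≤ c5 * (∫ r in (0:ℝ)..r₀, (p r * ((ξ r + r * ξ' r) / r) ^ 2
            + Bθ r ^ 2 * (k * η r - (r * ξ' r - ξ r) / r) ^ 2) * r)
          + c6 * (∫ r in (0:ℝ)..r₀, ρ r * (ξ r ^ 2 + η r ^ 2) * r) := by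
          refine add_le_add (mul_le_mul_of_nonneg_left ?_ hc5nn)
            (mul_le_mul_of_nonneg_left ?_ hc6nn)
          · linarith only [hadjn1, h0an1nn]
          · linarith only [hadjn2, h0an2nn]
  have hQsplit : (∫ r in a..r₀, (p' r * ξ r ^ 2 + p r * (2 * ξ r * ξ' r)))
      = (∫ r in a..r₀, p' r * ξ r ^ 2) + ∫ r in a..r₀, p r * (2 * ξ r * ξ' r) :=
    intervalIntegral.integral_add hiP hiQ
  have hS2eq : (∫ r in a..r₀, 2 * p' r * ξ r ^ 2) = 2 * ∫ r in a..r₀, p' r * ξ r ^ 2 := by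
    rw [← intervalIntegral.integral_const_mul]
    apply intervalIntegral.integral_congr
    intro r hr
    ring
  have hS2 : |∫ r in a..r₀, 2 * p' r * ξ r ^ 2|
      ≤ 2 * Mp * ξ a ^ 2
        + 2 * (c5 * (∫ r in (0:ℝ)..r₀, (p r * ((ξ r + r * ξ' r) / r) ^ 2
            + Bθ r ^ 2 * (k * η r - (r * ξ' r - ξ r) / r) ^ 2) * r)
          + c6 * (∫ r in (0:ℝ)..r₀, ρ r * (ξ r ^ 2 + η r ^ 2) * r)) := by
    have hEq : (∫ r in a..r₀, p' r * ξ r ^ 2)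
        = -(p a * ξ a ^ 2) - ∫ r in a..r₀, p r * (2 * ξ r * ξ' r) := by
      linarith only [hFTC2, hQsplit]
    rw [hS2eq, abs_mul, abs_two, hEq]
    have haI : a ∈ Icc (0:ℝ) r₀ := ⟨ha0.le, har.le⟩
    have h1 : |-(p a * ξ a ^ 2) - ∫ r in a..r₀, p r * (2 * ξ r * ξ' r)|
        ≤ p a * ξ a ^ 2 + |∫ r in a..r₀, p r * (2 * ξ r * ξ' r)| := by
      refine (abs_sub _ _).trans ?_
      rw [abs_neg, abs_of_nonneg (mul_nonneg (hpnn a haI) (sq_nonneg _))]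
    have h2 : p a * ξ a ^ 2 ≤ Mp * ξ a ^ 2 :=
      mul_le_mul_of_nonneg_right (hpub a haI) (sq_nonneg _)
    linarith only [hQb, h1, h2]
  -- assemble everything
  have hfinal : |∫ r in (0:ℝ)..r₀,
        (2 * p' r * ξ r ^ 2 / r + Bθ r ^ 2 * (k * η r - (r * ξ' r - ξ r) / r) ^ 2
          + γ * p r * ((ξ r + r * ξ' r) / r - k * η r) ^ 2) * r|
      ≤ Ca * (∫ r in (0:ℝ)..r₀, (p r * ((ξ r + r * ξ' r) / r) ^ 2
          + Bθ r ^ 2 * (k * η r - (r * ξ' r - ξ r) / r) ^ 2) * r)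
        + Cb * (∫ r in (0:ℝ)..r₀, ρ r * (ξ r ^ 2 + η r ^ 2) * r) := by
    rw [hIdecomp]
    have t1 : |(∫ r in (0:ℝ)..r₀, 2 * p' r * ξ r ^ 2)
        + ((∫ r in (0:ℝ)..r₀, Bθ r ^ 2 * (k * η r - (r * ξ' r - ξ r) / r) ^ 2 * r)
          + (∫ r in (0:ℝ)..r₀, γ * p r * ((ξ r + r * ξ' r) / r - k * η r) ^ 2 * r))|
        ≤ |∫ r in (0:ℝ)..r₀, 2 * p' r * ξ r ^ 2|
          + |∫ r in (0:ℝ)..r₀, Bθ r ^ 2 * (k * η r - (r * ξ' r - ξ r) / r) ^ 2 * r|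
          + |∫ r in (0:ℝ)..r₀, γ * p r * ((ξ r + r * ξ' r) / r - k * η r) ^ 2 * r| := by
      refine (abs_add_le _ _).trans ?_
      linarith only [abs_add_le (∫ r in (0:ℝ)..r₀, Bθ r ^ 2 * (k * η r - (r * ξ' r - ξ r) / r) ^ 2 * r)
        (∫ r in (0:ℝ)..r₀, γ * p r * ((ξ r + r * ξ' r) / r - k * η r) ^ 2 * r)]
    have t2 : |∫ r in (0:ℝ)..r₀, 2 * p' r * ξ r ^ 2|
        ≤ |∫ r in (0:ℝ)..a, 2 * p' r * ξ r ^ 2| + |∫ r in a..r₀, 2 * p' r * ξ r ^ 2| := by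
      rw [← hadj1]
      exact abs_add_le _ _
    have hMps : 2 * Mp * ξ a ^ 2 ≤ 2 * Mp * (1 / a * (1 / c
        * (∫ r in (0:ℝ)..r₀, (p r * ((ξ r + r * ξ' r) / r) ^ 2
          + Bθ r ^ 2 * (k * η r - (r * ξ' r - ξ r) / r) ^ 2) * r)
        + 1 / cρ * (∫ r in (0:ℝ)..r₀, ρ r * (ξ r ^ 2 + η r ^ 2) * r))) :=
      mul_le_mul_of_nonneg_left hξa2 (by positivity)
    rw [hCadef, hCbdef]
    linarith only [t1, t2, hS1, hS2, hS3, hS4, hMps]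
  have habs2 : |2 * Real.pi ^ 2 * ∫ r in (0:ℝ)..r₀,
        (2 * p' r * ξ r ^ 2 / r + Bθ r ^ 2 * (k * η r - (r * ξ' r - ξ r) / r) ^ 2
          + γ * p r * ((ξ r + r * ξ' r) / r - k * η r) ^ 2) * r|
      = 2 * Real.pi ^ 2 * |∫ r in (0:ℝ)..r₀,
        (2 * p' r * ξ r ^ 2 / r + Bθ r ^ 2 * (k * η r - (r * ξ' r - ξ r) / r) ^ 2
          + γ * p r * ((ξ r + r * ξ' r) / r - k * η r) ^ 2) * r| := by
    rw [abs_mul, abs_of_nonneg hπnn]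
  rw [habs2]
  calc 2 * Real.pi ^ 2 * |∫ r in (0:ℝ)..r₀,
        (2 * p' r * ξ r ^ 2 / r + Bθ r ^ 2 * (k * η r - (r * ξ' r - ξ r) / r) ^ 2
          + γ * p r * ((ξ r + r * ξ' r) / r - k * η r) ^ 2) * r|
      ≤ 2 * Real.pi ^ 2 * (Ca * (∫ r in (0:ℝ)..r₀, (p r * ((ξ r + r * ξ' r) / r) ^ 2
          + Bθ r ^ 2 * (k * η r - (r * ξ' r - ξ r) / r) ^ 2) * r)
        + Cb * (∫ r in (0:ℝ)..r₀, ρ r * (ξ r ^ 2 + η r ^ 2) * r)) :=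
        mul_le_mul_of_nonneg_left hfinal hπnn
    _ ≤ (2 * Real.pi ^ 2 * (Ca + Cb) + 1)
        * ((∫ r in (0:ℝ)..r₀, (p r * ((ξ r + r * ξ' r) / r) ^ 2
          + Bθ r ^ 2 * (k * η r - (r * ξ' r - ξ r) / r) ^ 2) * r)
          + (∫ r in (0:ℝ)..r₀, ρ r * (ξ r ^ 2 + η r ^ 2) * r)) := by
        linarith only [mul_nonneg (mul_nonneg hπnn hCann) hN2nn,
          mul_nonneg (mul_nonneg hπnn hCbnn) hN1nn, hN1nn, hN2nn]
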